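/- If an abelian group G has finite injective rank, then G is Bassian-finite. -/

import Mathlib

/-- An abelian group `G` has *finite injective rank* if an endomorphism `φ` of `G`
is injective exactly when the quotient `G / φ(G)` is finite. -/
def FiniteInjectiveRank (G : Type*) [AddCommGroup G] : Prop :=
  ∀ φ : G →+ G, Function.Injective φ ↔ Finite (G ⧸ φ.range)

/-- An abelian group `G` is *Bassian-finite* if there is no injective homomorphism
from `G` into a proper direct summand of `G`. -/
def BassianFinite (G : Type*) [AddCommGroup G] : Prop :=
  ∀ A B : AddSubgroup G, IsCompl A B → B ≠ ⊥ → ∀ φ : G →+ A, ¬ Function.Injective φ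

/-- Every abelian group of finite injective rank is Bassian-finite. -/
theorem BassianFinite.of_finiteInjectiveRank (G : Type*) [AddCommGroup G]
    (h : FiniteInjectiveRank G) : BassianFinite G := by
  intro A B hAB hB φ hφ
  -- ψ : G →+ G, the composite of φ with the inclusion of A
  set ψ : G →+ G := A.subtype.comp φ with hψdef
  have hψinj : Function.Injective ψ := Subtype.val_injective.comp hφ
  have h1 : Finite (G ⧸ ψ.range) := (h ψ).mp hψinj
  -- ψ.range ≤ A
  have hrange : ψ.range ≤ A := by
    rintro x ⟨y, rfl⟩
    exact (φ y).2
  -- hence G ⧸ A is finite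
  have h2 : Finite (G ⧸ A) := by
    have hsurj : Function.Surjective
        (QuotientAddGroup.map ψ.range A (AddMonoidHom.id G) hrange) := by
      intro x
      obtain ⟨g, rfl⟩ := QuotientAddGroup.mk_surjective x
      exact ⟨QuotientAddGroup.mk g, rfl⟩
    exact Finite.of_surjective _ hsurj
  -- the projection onto A along B, via ℤ-modules
  have hAB' : IsCompl (AddSubgroup.toIntSubmodule A) (AddSubgroup.toIntSubmodule B) :=
    (AddSubgroup.toIntSubmodule : AddSubgroup G ≃o Submodule ℤ G).isCompl hAB
  set f := Submodule.projectionOnto _ _ hAB' with hfdef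
  set p : G →+ G :=
    ((AddSubgroup.toIntSubmodule A).subtype.comp f).toAddMonoidHom with hpdef
  -- χ = ψ ∘ p is not injective (it kills B) but its range has finite index
  set χ : G →+ G := ψ.comp p with hχdef
  have hχrange : χ.range = A.map ψ := by
    apply le_antisymm
    · rintro x ⟨g, rfl⟩
      exact ⟨p g, (f g).2, rfl⟩
    · rintro x ⟨a, ha, rfl⟩
      refine ⟨a, ?_⟩
      show ψ (p a) = ψ a
      congr 1
      show ((f a : G)) = a
      rw [hfdef, Submodule.projectionOnto_apply_left hAB' ⟨a, ha⟩]
  have hfin : Finite (G ⧸ χ.range) := by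
    rw [hχrange]
    have : (A.map ψ).index = A.index * ψ.range.index :=
      AddSubgroup.index_map_of_injective A hψinj
    have hne : (A.map ψ).index ≠ 0 := by
      rw [this]
      exact mul_ne_zero A.index_ne_zero_of_finite ψ.range.index_ne_zero_of_finite
    have : (A.map ψ).FiniteIndex := ⟨hne⟩
    exact AddSubgroup.finite_quotient_of_finiteIndex
  have hχinj : Function.Injective χ := (h χ).mpr hfin
  -- but χ kills B, which is nonzero
  have : ∃ b ∈ B, b ≠ 0 := by
    by_contra hc
    push_neg at hc
    exact hB ((AddSubgroup.eq_bot_iff_forall B).mpr hc)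
  obtain ⟨b, hbB, hb0⟩ := this
  apply hb0
  apply hχinj
  have hpb : p b = 0 := by
    show ((f b : G)) = 0
    rw [hfdef, Submodule.projectionOnto_apply_of_mem_right hAB' hbB]
    rfl
  show ψ (p b) = χ 0
  rw [hpb, map_zero, map_zero]
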